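/- Let $\Phi$ and $\phi$ denote the standard normal CDF and density. Then the function $z\mapsto (\Phi/\phi)'(z)=1+z\,\Phi(z)/\phi(z)$ is increasing on $\mathbb{R}$ and takes values in $(0,\infty)$. -/

import Mathlib

open Set MeasureTheory Real Filter

private lemma aux_pos_of_strictMono_tendsto (f : ℝ → ℝ) (hmono : StrictMono f)
    (h0 : Tendsto f atBot (nhds 0)) : ∀ z, 0 < f z := by
  intro z
  by_contra h
  push_neg at h
  have h1 : f (z - 1) < f z := hmono (by linarith)
  have h2 : ∀ᶠ w in atBot, f w ≤ f (z - 1) :=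
    eventually_atBot.2 ⟨z - 1, fun w hw => hmono.monotone hw⟩
  have := le_of_tendsto h0 h2
  linarith

private lemma aux_tendsto_pow_exp (n : ℕ) :
    Tendsto (fun z : ℝ => z ^ n * Real.exp z) atBot (nhds 0) := by
  have h := (tendsto_pow_mul_exp_neg_atTop_nhds_zero n).comp tendsto_neg_atBot_atTop
  have h2 : Tendsto (fun z : ℝ => (-1 : ℝ) ^ n * ((-z) ^ n * Real.exp (-(-z)))) atBot
      (nhds ((-1) ^ n * 0)) := h.const_mul _
  simp only [mul_zero] at h2
  refine h2.congr fun z => ?_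
  rw [neg_neg, ← mul_assoc, ← mul_pow]
  norm_num

/-- The function `z ↦ (Φ/φ)'(z) = 1 + z Φ(z)/φ(z)` (with `Φ`, `φ` the standard normal
CDF and density) is strictly increasing and positive on `ℝ`. -/
theorem mills_ratio_derivative_increasing_pos
    (φ Φ : ℝ → ℝ)
    (hφ : ∀ z, φ z = (Real.sqrt (2 * π))⁻¹ * Real.exp (-z ^ 2 / 2))
    (hΦ : ∀ z, Φ z = ∫ t in Iic z, φ t) :
    StrictMono (fun z => 1 + z * Φ z / φ z) ∧
      ∀ z, 0 < 1 + z * Φ z / φ z := by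
  set c : ℝ := (Real.sqrt (2 * π))⁻¹ with hc_def
  have hc : 0 < c := by
    rw [hc_def]
    positivity
  have hφpos : ∀ z, 0 < φ z := fun z => by rw [hφ z]; positivity
  have hφeq : φ = fun z => c * Real.exp (-z ^ 2 / 2) := funext hφ
  have hφcont : Continuous φ := by rw [hφeq]; fun_prop
  -- integrability of φ
  have hint : Integrable φ := by
    have h := (integrable_exp_neg_mul_sq (show (0:ℝ) < 1/2 by norm_num)).const_mul c
    rw [hφeq]
    refine h.congr ?_
    filter_upwards with x
    ring_nf
  -- derivative of φ
  have hφderiv : ∀ z, HasDerivAt φ (-z * φ z) z := by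
    intro z
    rw [hφeq]
    have h1 : HasDerivAt (fun z : ℝ => -z ^ 2 / 2) (-z) z := by
      have := ((hasDerivAt_pow 2 z).neg.div_const 2)
      refine this.congr_deriv ?_
      ring
    have h2 := (h1.exp).const_mul c
    refine h2.congr_deriv ?_
    ring
  -- derivative of Φ
  have hΦkey : ∀ z, Φ z = (∫ t in Iic (0:ℝ), φ t) + ∫ t in (0:ℝ)..z, φ t := by
    intro z
    rw [hΦ z, ← intervalIntegral.integral_Iic_sub_Iic hint.integrableOn hint.integrableOn]
    ring
  have hΦderiv : ∀ z, HasDerivAt Φ (φ z) z := by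
    intro z
    rw [funext hΦkey]
    exact ((hφcont.integral_hasStrictDerivAt 0 z).hasDerivAt).const_add _
  have hΦnonneg : ∀ z, 0 ≤ Φ z := fun z => by
    rw [hΦ z]
    exact setIntegral_nonneg measurableSet_Iic fun t _ => (hφpos t).le
  have hΦpos : ∀ z, 0 < Φ z := by
    intro z
    have hsplit : Φ z - Φ (z - 1) = ∫ t in (z-1)..z, φ t := by
      rw [hΦ z, hΦ (z-1)]
      exact intervalIntegral.integral_Iic_sub_Iic hint.integrableOn hint.integrableOn
    have hpos : 0 < ∫ t in (z-1)..z, φ t :=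
      intervalIntegral.intervalIntegral_pos_of_pos (hφcont.intervalIntegrable _ _)
        hφpos (by linarith)
    have := hΦnonneg (z - 1)
    linarith
  -- tail bounds
  have hφbound : ∀ z ≤ (-2:ℝ), φ z ≤ c * Real.exp z := by
    intro z hz
    rw [hφ z]
    have : -z ^ 2 / 2 ≤ z := by nlinarith
    exact mul_le_mul_of_nonneg_left (Real.exp_le_exp.2 this) hc.le
  have hΦbound : ∀ z ≤ (-2:ℝ), Φ z ≤ c * Real.exp z := by
    intro z hz
    rw [hΦ z]
    calc (∫ t in Iic z, φ t) ≤ ∫ t in Iic z, c * Real.exp t := by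
          refine setIntegral_mono_on hint.integrableOn
            ((integrableOn_exp_Iic z).const_mul c) measurableSet_Iic fun t ht => ?_
          exact hφbound t (le_trans ht hz)
      _ = c * Real.exp z := by
          rw [MeasureTheory.integral_const_mul, integral_exp_Iic]
  -- the function A(z) = φ z + z Φ z
  have hAderiv : ∀ z, HasDerivAt (fun z => φ z + z * Φ z) (Φ z) z := by
    intro z
    have := (hφderiv z).add ((hasDerivAt_id z).mul (hΦderiv z))
    refine this.congr_deriv ?_
    simp only [id_eq]
    ring
  have hA0 : Tendsto (fun z => φ z + z * Φ z) atBot (nhds 0) := by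
    have hlow : Tendsto (fun z : ℝ => z * (c * Real.exp z)) atBot (nhds 0) := by
      have := (aux_tendsto_pow_exp 1).const_mul c
      simp only [mul_zero] at this
      refine this.congr fun z => ?_
      ring
    have hup : Tendsto (fun z : ℝ => c * Real.exp z) atBot (nhds 0) := by
      simpa using (Real.tendsto_exp_atBot).const_mul c
    refine tendsto_of_tendsto_of_tendsto_of_le_of_le' hlow hup ?_ ?_
    · filter_upwards [eventually_le_atBot (-2:ℝ)] with z hz
      have h1 : z * Φ z ≥ z * (c * Real.exp z) :=
        mul_le_mul_of_nonpos_left (hΦbound z hz) (by linarith)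
      have := (hφpos z).le
      linarith
    · filter_upwards [eventually_le_atBot (-2:ℝ)] with z hz
      have h1 : z * Φ z ≤ 0 := mul_nonpos_of_nonpos_of_nonneg (by linarith) (hΦnonneg z)
      have := hφbound z hz
      linarith
  have hApos : ∀ z, 0 < φ z + z * Φ z :=
    aux_pos_of_strictMono_tendsto _
      (strictMono_of_hasDerivAt_pos hAderiv fun z => hΦpos z) hA0
  -- the function B(z) = (1 + z²) Φ z + z φ z
  have hBderiv : ∀ z, HasDerivAt (fun z => (1 + z ^ 2) * Φ z + z * φ z)
      (2 * (φ z + z * Φ z)) z := by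
    intro z
    have h1 : HasDerivAt (fun z : ℝ => 1 + z ^ 2) (2 * z) z := by
      simpa using ((hasDerivAt_pow 2 z).const_add 1)
    have := (h1.mul (hΦderiv z)).add ((hasDerivAt_id z).mul (hφderiv z))
    refine this.congr_deriv ?_
    simp only [id_eq]
    ring
  have hB0 : Tendsto (fun z => (1 + z ^ 2) * Φ z + z * φ z) atBot (nhds 0) := by
    have hlow : Tendsto (fun z : ℝ => z * (c * Real.exp z)) atBot (nhds 0) := by
      have := (aux_tendsto_pow_exp 1).const_mul c
      simp only [mul_zero] at this
      refine this.congr fun z => ?_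
      ring
    have hup : Tendsto (fun z : ℝ => (1 + z ^ 2) * (c * Real.exp z)) atBot (nhds 0) := by
      have h1 := (Real.tendsto_exp_atBot).const_mul c
      have h2 := (aux_tendsto_pow_exp 2).const_mul c
      have := h1.add h2
      simp only [mul_zero, add_zero] at this
      refine this.congr fun z => ?_
      ring
    refine tendsto_of_tendsto_of_tendsto_of_le_of_le' hlow hup ?_ ?_
    · filter_upwards [eventually_le_atBot (-2:ℝ)] with z hz
      have h1 : z * φ z ≥ z * (c * Real.exp z) :=
        mul_le_mul_of_nonpos_left (hφbound z hz) (by linarith)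
      have h2 : 0 ≤ (1 + z ^ 2) * Φ z := mul_nonneg (by positivity) (hΦnonneg z)
      linarith
    · filter_upwards [eventually_le_atBot (-2:ℝ)] with z hz
      have h1 : z * φ z ≤ 0 := mul_nonpos_of_nonpos_of_nonneg (by linarith) (hφpos z).le
      have h2 : (1 + z ^ 2) * Φ z ≤ (1 + z ^ 2) * (c * Real.exp z) :=
        mul_le_mul_of_nonneg_left (hΦbound z hz) (by positivity)
      linarith
  have hBpos : ∀ z, 0 < (1 + z ^ 2) * Φ z + z * φ z :=
    aux_pos_of_strictMono_tendsto _
      (strictMono_of_hasDerivAt_pos hBderiv fun z => by linarith [hApos z]) hB0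
  constructor
  · -- strict monotonicity via derivative B/φ > 0
    refine strictMono_of_hasDerivAt_pos
      (f' := fun z => ((1 + z ^ 2) * Φ z + z * φ z) / φ z) (fun z => ?_)
      (fun z => div_pos (hBpos z) (hφpos z))
    have hnum : HasDerivAt (fun z => z * Φ z) (Φ z + z * φ z) z := by
      have := (hasDerivAt_id z).mul (hΦderiv z)
      refine this.congr_deriv ?_
      simp only [id_eq]
      ring
    have hdiv := hnum.div (hφderiv z) (hφpos z).ne'
    have := hdiv.const_add 1
    refine this.congr_deriv ?_
    field_simp [(hφpos z).ne']
    ring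
  · intro z
    have h : 1 + z * Φ z / φ z = (φ z + z * Φ z) / φ z := by
      rw [add_div, div_self (hφpos z).ne']
    rw [h]
    exact div_pos (hApos z) (hφpos z)
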